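/- If additionally f is M-Lipschitz (so all subgradient norms are bounded by M) and has an α-sharp minimum, the subgradient method with Polyak stepsize converges linearly: dist(x^{k+1}, X*)² ≤ (1 - α²/M²)^{k+1} · dist(x^0, X*)². -/

import Mathlib

/-- Linear (geometric) convergence of the subgradient method with Polyak
stepsize for a convex `M`-Lipschitz function with an `α`-sharp minimum:
`dist(x^{k+1}, X*)² ≤ (1 - α²/M²)^{k+1} dist(x⁰, X*)²`. -/
theorem polyak_sharp_min_linear_rate {n : ℕ} (f : EuclideanSpace ℝ (Fin n) → ℝ)
    (Xstar : Set (EuclideanSpace ℝ (Fin n))) (fstar α M : ℝ) (hα : 0 < α) (hM : 0 < M)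
    (hXstar : Xstar = {y | ∀ z, f y ≤ f z}) (hne : Xstar.Nonempty)
    (hfstar : ∀ y ∈ Xstar, f y = fstar)
    (hLip : ∀ a b, |f a - f b| ≤ M * ‖a - b‖)
    (x g : ℕ → EuclideanSpace ℝ (Fin n))
    (hsub : ∀ k y, f y ≥ f (x k) + (inner ℝ (g k) (y - x k) : ℝ))
    (hgne : ∀ k, g k ≠ 0)
    (hsharp : ∀ y, f y - fstar ≥ α * Metric.infDist y Xstar)
    (hstep : ∀ k, x (k + 1) = x k - ((f (x k) - fstar) / ‖g k‖ ^ 2) • g k) :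
    ∀ k, Metric.infDist (x (k + 1)) Xstar ^ 2
      ≤ (1 - α ^ 2 / M ^ 2) ^ (k + 1) * Metric.infDist (x 0) Xstar ^ 2 := by
  have hfmin : ∀ y ∈ Xstar, ∀ z, f y ≤ f z := fun y hy => by rw [hXstar] at hy; exact hy
  obtain ⟨y0, hy0⟩ := hne
  have hne : Xstar.Nonempty := ⟨y0, hy0⟩
  have hfge : ∀ z, fstar ≤ f z := fun z => (hfstar y0 hy0) ▸ hfmin y0 hy0 z
  have hf_cont : Continuous f := by
    have : LipschitzWith (Real.toNNReal M) f := by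
      apply LipschitzWith.of_dist_le_mul
      intro a b
      rw [Real.dist_eq, dist_eq_norm, Real.coe_toNNReal M hM.le]
      exact hLip a b
    exact this.continuous
  have hclosed : IsClosed Xstar := by
    rw [hXstar]
    have : {y | ∀ z, f y ≤ f z} = ⋂ z, {y | f y ≤ f z} := by ext y; simp
    rw [this]
    exact isClosed_iInter fun z => isClosed_le hf_cont continuous_const
  have hG : ∀ k, 0 < ‖g k‖ := fun k => norm_pos_iff.mpr (hgne k)
  have hinner : ∀ k, (inner ℝ (g k) (x k + g k - x k) : ℝ) = ‖g k‖ ^ 2 := by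
    intro k
    rw [add_sub_cancel_left, real_inner_self_eq_norm_sq]
  have hGM : ∀ k, ‖g k‖ ≤ M := by
    intro k
    have h1 := hsub k (x k + g k)
    rw [hinner k] at h1
    have h3 : |f (x k + g k) - f (x k)| ≤ M * ‖g k‖ := by
      have := hLip (x k + g k) (x k); simpa using this
    have := abs_le.mp h3
    have := hG k
    nlinarith
  have hαM : α ≤ M := by
    have hex : ∃ y, y ∉ Xstar := by
      by_contra hall
      push_neg at hall
      have h1 := hsub 0 (x 0 + g 0)
      rw [hinner 0] at h1
      have h3 : f (x 0 + g 0) ≤ f (x 0) := hfmin _ (hall _) _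
      have := hG 0
      nlinarith
    obtain ⟨y, hy⟩ := hex
    have hd : 0 < Metric.infDist y Xstar := (hclosed.notMem_iff_infDist_pos hne).mp hy
    obtain ⟨xs, hxs, hdist⟩ := hclosed.exists_infDist_eq_dist hne y
    have h4 : f y - fstar ≤ M * Metric.infDist y Xstar := by
      have h5 := abs_le.mp (hLip y xs)
      rw [hfstar xs hxs] at h5
      rw [hdist, dist_eq_norm]
      linarith [h5.2]
    have h5 := hsharp y
    nlinarith
  have key : ∀ k, Metric.infDist (x (k + 1)) Xstar ^ 2
      ≤ (1 - α ^ 2 / M ^ 2) * Metric.infDist (x k) Xstar ^ 2 := by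
    intro k
    obtain ⟨xs, hxs, hdist⟩ := hclosed.exists_infDist_eq_dist hne (x k)
    set d := Metric.infDist (x k) Xstar with hd
    set F := f (x k) - fstar with hF
    set G := ‖g k‖ with hGdef
    have hd0 : 0 ≤ d := Metric.infDist_nonneg
    have hF0 : 0 ≤ F := sub_nonneg.mpr (hfge (x k))
    have hFd : α * d ≤ F := hsharp (x k)
    have hG0 : 0 < G := hG k
    have hGM' : G ≤ M := hGM k
    have hnorm : ‖x k - xs‖ = d := by rw [hdist, dist_eq_norm]
    have hip : F ≤ inner ℝ (g k) (x k - xs) := by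
      have h1 := hsub k xs
      have h2 : (inner ℝ (g k) (xs - x k) : ℝ) = - inner ℝ (g k) (x k - xs) := by
        rw [← inner_neg_right]
        congr 1
        abel
      rw [h2, hfstar xs hxs] at h1
      linarith
    have hle : Metric.infDist (x (k + 1)) Xstar ≤ ‖x (k + 1) - xs‖ := by
      rw [← dist_eq_norm]; exact Metric.infDist_le_dist_of_mem hxs
    have hG2 : (0 : ℝ) < G ^ 2 := by positivity
    have hM2 : (0 : ℝ) < M ^ 2 := by positivity
    set ip : ℝ := inner ℝ (x k - xs) (g k) with hipdef
    rw [real_inner_comm] at hip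
    have hexp : ‖x (k + 1) - xs‖ ^ 2
        = d ^ 2 - 2 * (F / G ^ 2) * ip + (F / G ^ 2) ^ 2 * G ^ 2 := by
      rw [hstep k]
      have heq : x k - (F / G ^ 2) • g k - xs = (x k - xs) - (F / G ^ 2) • g k := by
        abel
      rw [heq, norm_sub_sq_real, real_inner_smul_right, norm_smul, Real.norm_eq_abs,
        mul_pow, sq_abs, hnorm, ← hGdef, ← hipdef]
      ring
    have hstepF : (F / G ^ 2) ^ 2 * G ^ 2 = F ^ 2 / G ^ 2 := by
      field_simp
    have h2 : F ^ 2 / G ^ 2 ≤ (F / G ^ 2) * ip := by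
      have := mul_le_mul_of_nonneg_left hip (by positivity : (0:ℝ) ≤ F / G ^ 2)
      have heq : (F / G ^ 2) * F = F ^ 2 / G ^ 2 := by ring
      linarith [heq ▸ this]
    have h1 : ‖x (k + 1) - xs‖ ^ 2 ≤ d ^ 2 - F ^ 2 / G ^ 2 := by
      rw [hexp, hstepF]; linarith
    have hchain : α ^ 2 / M ^ 2 * d ^ 2 ≤ F ^ 2 / G ^ 2 := by
      have e : α ^ 2 / M ^ 2 * d ^ 2 = (α ^ 2 * d ^ 2) / M ^ 2 := by ring
      rw [e]
      have hF2 : α ^ 2 * d ^ 2 ≤ F ^ 2 := by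
        nlinarith [mul_nonneg (sub_nonneg.mpr hFd) (by positivity : (0:ℝ) ≤ F + α * d)]
      calc (α ^ 2 * d ^ 2) / M ^ 2 ≤ F ^ 2 / M ^ 2 := by gcongr
        _ ≤ F ^ 2 / G ^ 2 := by
            apply div_le_div_of_nonneg_left (by positivity) hG2
            nlinarith
    have hsq : Metric.infDist (x (k + 1)) Xstar ^ 2 ≤ ‖x (k + 1) - xs‖ ^ 2 := by
      have h0 : (0:ℝ) ≤ Metric.infDist (x (k + 1)) Xstar := Metric.infDist_nonneg
      exact pow_le_pow_left₀ h0 hle 2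
    have e2 : (1 - α ^ 2 / M ^ 2) * d ^ 2 = d ^ 2 - α ^ 2 / M ^ 2 * d ^ 2 := by ring
    rw [e2]
    linarith
  have hq0 : (0 : ℝ) ≤ 1 - α ^ 2 / M ^ 2 := by
    have h1 : α ^ 2 ≤ M ^ 2 := by nlinarith
    have h2 : α ^ 2 / M ^ 2 ≤ 1 := by
      rw [div_le_one (by positivity)]; exact h1
    linarith
  intro k
  induction k with
  | zero => simpa using key 0
  | succ k ih =>
    calc Metric.infDist (x (k + 1 + 1)) Xstar ^ 2
        ≤ (1 - α ^ 2 / M ^ 2) * Metric.infDist (x (k + 1)) Xstar ^ 2 := key (k + 1)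
      _ ≤ (1 - α ^ 2 / M ^ 2) * ((1 - α ^ 2 / M ^ 2) ^ (k + 1)
            * Metric.infDist (x 0) Xstar ^ 2) := mul_le_mul_of_nonneg_left ih hq0
      _ = (1 - α ^ 2 / M ^ 2) ^ (k + 1 + 1) * Metric.infDist (x 0) Xstar ^ 2 := by ring
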